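/- arXiv:1103.0061 — 7 statements merged into one kernel-verified Lean document; each statement's English description precedes it below -/
import Mathlib

section
/- Let G be a pure-impulse profile of Klaus–Shaw type. Then for every w with G(0) < w < 0, the inverse function is recovered from the WKB phase integral by the Abel-type inversion formula: (2/π) · ∫_{v=-w}^{-G(0)} [ v / √(v² − w²) ] · ( ∫_{s=0}^{G⁻¹(−v)} ds / √(G(s)² − v²) ) dv = G⁻¹(w). -/
open MeasureTheory Real Filter

section AuxAbel

open Set
open scoped ENNReal


lemma sqrt_inv_int_left {a b : ℝ} : IntegrableOn (fun v => (Real.sqrt (v - a))⁻¹) (Ioc a b) volume := by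
  have h0 : IntervalIntegrable (fun x : ℝ => x ^ (-(1/2) : ℝ)) volume 0 (b - a) :=
    intervalIntegral.intervalIntegrable_rpow' (by norm_num)
  have h1 := h0.comp_sub_right a
  rw [zero_add, sub_add_cancel] at h1
  rcases le_or_gt a b with hab | hab
  · rw [intervalIntegrable_iff_integrableOn_Ioc_of_le hab] at h1
    apply h1.congr_fun ?_ measurableSet_Ioc
    intro v hv
    dsimp only
    rw [Real.rpow_neg (by linarith [hv.1] : (0:ℝ) ≤ v - a), ← Real.sqrt_eq_rpow]
  · simp [Ioc_eq_empty (not_lt.mpr hab.le)]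

lemma sqrt_inv_int_right {a b : ℝ} : IntegrableOn (fun v => (Real.sqrt (b - v))⁻¹) (Ioc a b) volume := by
  have h0 : IntervalIntegrable (fun x : ℝ => x ^ (-(1/2) : ℝ)) volume (b - a) 0 :=
    intervalIntegral.intervalIntegrable_rpow' (by norm_num)
  have h1 := (h0.comp_sub_left b : IntervalIntegrable (fun x => (b - x) ^ (-(1/2):ℝ)) volume (b - (b-a)) (b - 0))
  rw [sub_sub_cancel, sub_zero] at h1
  rcases le_or_gt a b with hab | hab
  · rw [intervalIntegrable_iff_integrableOn_Ioc_of_le hab] at h1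
    apply h1.congr_fun ?_ measurableSet_Ioc
    intro v hv
    rcases eq_or_lt_of_le hv.2 with h | h
    · subst h; simp
    · dsimp only
      rw [Real.rpow_neg (by linarith : (0:ℝ) ≤ b - v), ← Real.sqrt_eq_rpow]
  · simp [Ioc_eq_empty (not_lt.mpr hab.le)]

lemma aux_int {a b : ℝ} (ha : 0 < a) (hab : a < b) :
    IntervalIntegrable (fun v => v / (Real.sqrt (v^2 - a^2) * Real.sqrt (b^2 - v^2)))
      volume a b := by
  have hb : 0 < b := ha.trans hab
  set m := (a + b) / 2 with hm
  have ham : a < m := by rw [hm]; linarith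
  have hmb : m < b := by rw [hm]; linarith
  have hmeas : Measurable (fun v => v / (Real.sqrt (v^2 - a^2) * Real.sqrt (b^2 - v^2))) := by
    fun_prop
  have h1 : IntervalIntegrable (fun v => v / (Real.sqrt (v^2 - a^2) * Real.sqrt (b^2 - v^2)))
      volume a m := by
    rw [intervalIntegrable_iff_integrableOn_Ioc_of_le ham.le]
    have hbound : IntegrableOn
        (fun v => (b / (Real.sqrt (2*a) * Real.sqrt (b^2 - m^2))) * (Real.sqrt (v - a))⁻¹)
        (Ioc a m) volume := sqrt_inv_int_left.const_mul _
    apply Integrable.mono hbound (hmeas.aestronglyMeasurable.restrict)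
    rw [ae_restrict_iff' measurableSet_Ioc]
    refine .of_forall fun v hv => ?_
    obtain ⟨hv1, hv2⟩ := hv
    have hva : 0 < v - a := by linarith
    have hvb : v < b := lt_of_le_of_lt hv2 hmb
    have hsq1 : Real.sqrt (v^2 - a^2) = Real.sqrt (v - a) * Real.sqrt (v + a) := by
      rw [← Real.sqrt_mul hva.le]; ring_nf
    have hden1 : Real.sqrt (2*a) ≤ Real.sqrt (v + a) := Real.sqrt_le_sqrt (by linarith)
    have hden2 : Real.sqrt (b^2 - m^2) ≤ Real.sqrt (b^2 - v^2) := by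
      apply Real.sqrt_le_sqrt; nlinarith
    have hpos0 : 0 < Real.sqrt (v - a) := Real.sqrt_pos.2 hva
    have hpos1 : 0 < Real.sqrt (v + a) := Real.sqrt_pos.2 (by linarith)
    have hpos2 : 0 < Real.sqrt (b^2 - v^2) := Real.sqrt_pos.2 (by nlinarith)
    have hpos2m : 0 < Real.sqrt (b^2 - m^2) := Real.sqrt_pos.2 (by nlinarith)
    have hposa : 0 < Real.sqrt (2*a) := Real.sqrt_pos.2 (by linarith)
    have key : v / (Real.sqrt (v^2 - a^2) * Real.sqrt (b^2 - v^2))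
        ≤ b / (Real.sqrt (v - a) * (Real.sqrt (2*a) * Real.sqrt (b^2 - m^2))) := by
      rw [hsq1, mul_assoc]
      apply div_le_div₀ hb.le hvb.le (mul_pos hpos0 (mul_pos hposa hpos2m))
      exact mul_le_mul_of_nonneg_left (mul_le_mul hden1 hden2 hpos2m.le hpos1.le) hpos0.le
    rw [Real.norm_of_nonneg (div_nonneg (by linarith) (by positivity)),
      Real.norm_of_nonneg (mul_nonneg (div_nonneg hb.le (by positivity)) (by positivity))]
    calc v / (Real.sqrt (v^2 - a^2) * Real.sqrt (b^2 - v^2))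
        ≤ b / (Real.sqrt (v - a) * (Real.sqrt (2*a) * Real.sqrt (b^2 - m^2))) := key
      _ = b / (Real.sqrt (2*a) * Real.sqrt (b^2 - m^2)) * (Real.sqrt (v - a))⁻¹ := by
          ring
  have h2 : IntervalIntegrable (fun v => v / (Real.sqrt (v^2 - a^2) * Real.sqrt (b^2 - v^2)))
      volume m b := by
    rw [intervalIntegrable_iff_integrableOn_Ioc_of_le hmb.le]
    have hbound : IntegrableOn
        (fun v => (b / (Real.sqrt (m^2 - a^2) * Real.sqrt (b + m))) * (Real.sqrt (b - v))⁻¹)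
        (Ioc m b) volume := sqrt_inv_int_right.const_mul _
    apply Integrable.mono hbound (hmeas.aestronglyMeasurable.restrict)
    rw [ae_restrict_iff' measurableSet_Ioc]
    refine .of_forall fun v hv => ?_
    obtain ⟨hv1, hv2⟩ := hv
    have hva : a < v := ham.trans hv1
    have hsq1 : Real.sqrt (b^2 - v^2) = Real.sqrt (b - v) * Real.sqrt (b + v) := by
      rw [← Real.sqrt_mul (by linarith)]; ring_nf
    have hden1 : Real.sqrt (m^2 - a^2) ≤ Real.sqrt (v^2 - a^2) := by
      apply Real.sqrt_le_sqrt; nlinarith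
    have hden2 : Real.sqrt (b + m) ≤ Real.sqrt (b + v) := Real.sqrt_le_sqrt (by linarith)
    have hpos0 : 0 ≤ Real.sqrt (b - v) := Real.sqrt_nonneg _
    have hpos1 : 0 < Real.sqrt (b + v) := Real.sqrt_pos.2 (by linarith)
    have hpos2 : 0 < Real.sqrt (v^2 - a^2) := Real.sqrt_pos.2 (by nlinarith)
    have hpos2m : 0 < Real.sqrt (m^2 - a^2) := Real.sqrt_pos.2 (by nlinarith)
    have hposa : 0 < Real.sqrt (b + m) := Real.sqrt_pos.2 (by linarith)
    rw [Real.norm_of_nonneg (div_nonneg (by linarith) (by positivity)),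
      Real.norm_of_nonneg (mul_nonneg (div_nonneg hb.le (by positivity)) (by positivity))]
    rcases eq_or_lt_of_le hv2 with h | h
    · subst h
      simp [hsq1]
    · have hbv : 0 < Real.sqrt (b - v) := Real.sqrt_pos.2 (by linarith)
      have key : v / (Real.sqrt (v^2 - a^2) * Real.sqrt (b^2 - v^2))
          ≤ b / (Real.sqrt (b - v) * (Real.sqrt (m^2 - a^2) * Real.sqrt (b + m))) := by
        rw [hsq1]
        rw [show Real.sqrt (v^2-a^2) * (Real.sqrt (b-v) * Real.sqrt (b+v))
            = Real.sqrt (b-v) * (Real.sqrt (v^2-a^2) * Real.sqrt (b+v)) by ring]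
        apply div_le_div₀ hb.le hv2 (mul_pos hbv (mul_pos hpos2m hposa))
        exact mul_le_mul_of_nonneg_left (mul_le_mul hden1 hden2 hposa.le hpos2.le) hbv.le
      calc v / (Real.sqrt (v^2 - a^2) * Real.sqrt (b^2 - v^2))
          ≤ b / (Real.sqrt (b - v) * (Real.sqrt (m^2 - a^2) * Real.sqrt (b + m))) := key
        _ = b / (Real.sqrt (m^2 - a^2) * Real.sqrt (b + m)) * (Real.sqrt (b - v))⁻¹ := by
            ring
  exact h1.trans h2

lemma aux_val {a b : ℝ} (ha : 0 < a) (hab : a < b) :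
    ∫ v in a..b, v / (Real.sqrt (v^2 - a^2) * Real.sqrt (b^2 - v^2)) = Real.pi / 2 := by
  have hb : 0 < b := ha.trans hab
  have hD : (0:ℝ) < b^2 - a^2 := by nlinarith
  set F : ℝ → ℝ := fun x => (1/2) * Real.arcsin ((2*x^2 - a^2 - b^2) / (b^2 - a^2)) with hF
  have hcont : ContinuousOn F (Icc a b) := by
    apply Continuous.continuousOn
    exact continuous_const.mul (Real.continuous_arcsin.comp (by fun_prop))
  have hderiv : ∀ x ∈ Ioo a b,
      HasDerivAt F (x / (Real.sqrt (x^2 - a^2) * Real.sqrt (b^2 - x^2))) x := by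
    intro x hx
    obtain ⟨hx1, hx2⟩ := hx
    have hx0 : 0 < x := ha.trans hx1
    have hA : (0:ℝ) < x^2 - a^2 := by nlinarith
    have hB : (0:ℝ) < b^2 - x^2 := by nlinarith
    set q : ℝ := (2*x^2 - a^2 - b^2) / (b^2 - a^2) with hq
    have hq1 : q ≠ -1 := by
      intro h; rw [hq, div_eq_iff hD.ne'] at h; nlinarith
    have hq2 : q ≠ 1 := by
      intro h; rw [hq, div_eq_iff hD.ne'] at h; nlinarith
    have hqd : HasDerivAt (fun x : ℝ => (2*x^2 - a^2 - b^2) / (b^2 - a^2))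
        (4*x / (b^2 - a^2)) x := by
      have : HasDerivAt (fun x : ℝ => 2*x^2 - a^2 - b^2) (4*x) x := by
        have h := ((hasDerivAt_pow 2 x).const_mul 2).sub_const (a^2)
        have h2 := h.sub_const (b^2)
        exact h2.congr_deriv (by norm_num; ring)
      exact this.div_const _
    have harc := (Real.hasDerivAt_arcsin hq1 hq2).comp x hqd
    have hFd := harc.const_mul (1/2 : ℝ)
    refine hFd.congr_deriv (Eq.symm ?_)
    have hsq : Real.sqrt (1 - q^2)
        = 2 * Real.sqrt (x^2 - a^2) * Real.sqrt (b^2 - x^2) / (b^2 - a^2) := by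
      have h1 : 1 - q^2 = (2 * Real.sqrt (x^2 - a^2) * Real.sqrt (b^2 - x^2) / (b^2 - a^2))^2 := by
        rw [hq, div_pow, div_pow, mul_pow, mul_pow, Real.sq_sqrt hA.le, Real.sq_sqrt hB.le]
        field_simp
        ring
      rw [h1, Real.sqrt_sq (by positivity)]
    have hsA : 0 < Real.sqrt (x^2 - a^2) := Real.sqrt_pos.2 hA
    have hsB : 0 < Real.sqrt (b^2 - x^2) := Real.sqrt_pos.2 hB
    show x / (Real.sqrt (x^2 - a^2) * Real.sqrt (b^2 - x^2))
        = 1/2 * (1 / Real.sqrt (1 - q^2) * (4*x / (b^2 - a^2)))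
    rw [hsq]
    field_simp
    ring
  have := intervalIntegral.integral_eq_sub_of_hasDerivAt_of_le hab.le hcont hderiv
    (aux_int ha hab)
  rw [this, hF]
  have e1 : (2*b^2 - a^2 - b^2) / (b^2 - a^2) = 1 := by
    rw [div_eq_one_iff_eq hD.ne']; ring
  have e2 : (2*a^2 - a^2 - b^2) / (b^2 - a^2) = -1 := by
    rw [div_eq_iff hD.ne']; ring
  simp only [e1, e2, Real.arcsin_one, Real.arcsin_neg_one]
  ring


end AuxAbel

section Main
open Set
open scoped ENNReal

/-- **Abel-type inversion of the WKB phase integral.**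
For a pure-impulse Klaus–Shaw profile `G`, with `Ginv` the inverse of `G` restricted to
the positive half-line, the inverse function is recovered from (minus the derivative of)
the WKB phase integral:
`(2/π) ∫_{-w}^{-G(0)} (v/√(v²−w²)) · (∫₀^{G⁻¹(−v)} ds/√(G(s)²−v²)) dv = G⁻¹(w)`
for every `G(0) < w < 0`. -/
theorem abel_inversion_of_wkb_phase
    (G Ginv : ℝ → ℝ)
    (hG_smooth : ContDiff ℝ 1 G)
    (hG_neg : ∀ x, G x < 0)
    (hG_even : ∀ x, G (-x) = G x)
    (hG_mono : StrictMonoOn G (Set.Ioi (0 : ℝ)))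
    (hG_deriv : ∀ x, 0 < x → 0 < deriv G x)
    (hG_int : Integrable G)
    (hG_lim : Tendsto G atTop (nhds 0))
    (hGinv : ∀ w, G 0 < w → w < 0 → 0 < Ginv w ∧ G (Ginv w) = w)
    (w : ℝ) (hw₁ : G 0 < w) (hw₂ : w < 0) :
    (2 / Real.pi) *
        ∫ v in (-w)..(-(G 0)),
          (v / Real.sqrt (v ^ 2 - w ^ 2)) *
            ∫ s in (0 : ℝ)..(Ginv (-v)), 1 / Real.sqrt ((G s) ^ 2 - v ^ 2)
      = Ginv w := by
  have hGcont : Continuous G := hG_smooth.continuous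
  set a : ℝ := -w with ha_def
  set b : ℝ := -(G 0) with hb_def
  set c : ℝ := Ginv w with hc_def
  have ha : 0 < a := by simp [ha_def]; linarith
  have hab : a < b := by rw [ha_def, hb_def]; linarith
  obtain ⟨hc, hGc⟩ := hGinv w hw₁ hw₂
  have hwa : w = -a := by rw [ha_def]; ring
  have hG0le : ∀ s, 0 < s → G 0 ≤ G s := by
    intro s hs
    refine le_of_tendsto (hGcont.continuousAt.continuousWithinAt (s := Ioi 0)) ?_
    filter_upwards [Ioo_mem_nhdsGT_of_mem (⟨le_refl 0, hs⟩ : (0:ℝ) ∈ Ico 0 s)] with t ht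
    exact (hG_mono ht.1 hs ht.2).le
  -- the ENNReal-valued integrand
  set φ : ℝ → ℝ → ℝ≥0∞ := fun v s => ENNReal.ofReal (1 / Real.sqrt ((G s)^2 - v^2)) with hφ
  have measφ : Measurable (Function.uncurry φ) := by
    apply Measurable.ennreal_ofReal
    fun_prop
  set J : ℝ → ℝ≥0∞ := fun v => ∫⁻ s in Ioc 0 c, φ v s with hJ
  have measJ : Measurable J := Measurable.lintegral_prod_right measφ
  have hvanish : ∀ v s : ℝ, 0 < v → -v ≤ G s → φ v s = 0 := by
    intro v s hv hGs
    have h1 : (G s)^2 - v^2 ≤ 0 := by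
      have := sq_le_sq' hGs ((hG_neg s).le.trans hv.le)
      linarith
    rw [hφ]
    simp only
    rw [Real.sqrt_eq_zero'.mpr h1]
    simp
  have hmem : ∀ v ∈ Ioo a b, 0 < Ginv (-v) ∧ G (Ginv (-v)) = -v ∧ Ginv (-v) < c := by
    intro v hv
    have h1 : G 0 < -v := by rw [hb_def] at hv; linarith [hv.2]
    have h2 : -v < 0 := by linarith [ha.trans hv.1]
    obtain ⟨hd, hGd⟩ := hGinv (-v) h1 h2
    refine ⟨hd, hGd, ?_⟩
    have : G (Ginv (-v)) < G c := by rw [hGd, hGc]; rw [ha_def] at hv; linarith [hv.1]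
    exact (hG_mono.lt_iff_lt hd hc).mp this
  -- inner integral as a lintegral over the fixed interval Ioc 0 c
  have hinner : ∀ v ∈ Ioo a b,
      (∫ s in (0:ℝ)..(Ginv (-v)), 1 / Real.sqrt ((G s) ^ 2 - v ^ 2)) = (J v).toReal := by
    intro v hv
    obtain ⟨hd, hGd, hdc⟩ := hmem v hv
    have hva : 0 < v := ha.trans hv.1
    rw [intervalIntegral.integral_of_le hd.le]
    rw [integral_eq_lintegral_of_nonneg_ae
      (ae_of_all _ fun s => one_div_nonneg.mpr (Real.sqrt_nonneg _))
      ((by fun_prop : Measurable (fun s => 1 / Real.sqrt ((G s)^2 - v^2))).aestronglyMeasurable)]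
    congr 1
    rw [hJ]
    simp only
    rw [← Ioc_union_Ioc_eq_Ioc hd.le hdc.le,
      lintegral_union measurableSet_Ioc (Ioc_disjoint_Ioc_of_le le_rfl)]
    have hzero : ∫⁻ s in Ioc (Ginv (-v)) c, φ v s ∂volume = 0 := by
      have hz : ∀ s ∈ Ioc (Ginv (-v)) c, φ v s = (fun _ => (0:ℝ≥0∞)) s := by
        intro s hs
        apply hvanish v s hva
        rw [← hGd]
        exact hG_mono.monotoneOn hd (hd.trans hs.1) hs.1.le
      rw [setLIntegral_congr_fun_ae measurableSet_Ioc (ae_of_all _ hz), lintegral_zero]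
    rw [hzero, add_zero]
  set ψ : ℝ → ℝ≥0∞ := fun v => ENNReal.ofReal (v / Real.sqrt (v^2 - a^2)) with hψ
  have measψ : Measurable ψ := by apply Measurable.ennreal_ofReal; fun_prop
  have I2 : (∫⁻ v in Ioc a b, ψ v * J v) = ENNReal.ofReal (Real.pi/2 * c) := by
    have step1 : (∫⁻ v in Ioc a b, ψ v * J v)
        = ∫⁻ v in Ioc a b, ∫⁻ s in Ioc 0 c, ψ v * φ v s := by
      refine lintegral_congr fun v => ?_
      rw [hJ]
      exact (lintegral_const_mul' _ _ ENNReal.ofReal_ne_top).symm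
    have hswapm : Measurable (Function.uncurry fun v s => ψ v * φ v s) :=
      (measψ.comp measurable_fst).mul measφ
    rw [step1, lintegral_lintegral_swap hswapm.aemeasurable]
    have hsc : ∀ s ∈ Ioo 0 c, (∫⁻ v in Ioc a b, ψ v * φ v s) = ENNReal.ofReal (Real.pi/2) := by
      intro s hs
      set b' : ℝ := -G s with hb'
      have hsw : G s < w := by rw [← hGc]; exact hG_mono hs.1 hc hs.2
      have hab' : a < b' := by rw [ha_def, hb']; linarith
      have hb'b : b' ≤ b := by rw [hb', hb_def]; have := hG0le s hs.1; linarith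
      rw [← Ioc_union_Ioc_eq_Ioc hab'.le hb'b,
        lintegral_union measurableSet_Ioc (Ioc_disjoint_Ioc_of_le le_rfl)]
      have hzero2 : ∫⁻ v in Ioc b' b, ψ v * φ v s ∂volume = 0 := by
        have hz : ∀ v ∈ Ioc b' b, ψ v * φ v s = (fun _ => (0:ℝ≥0∞)) v := by
          intro v hv
          have hv0 : 0 < v := ha.trans (hab'.trans hv.1)
          have : φ v s = 0 := hvanish v s hv0 (by rw [hb'] at hv; linarith [hv.1])
          simp [this]
        rw [setLIntegral_congr_fun_ae measurableSet_Ioc (ae_of_all _ hz), lintegral_zero]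
      rw [hzero2, add_zero]
      have hcong : ∀ v ∈ Ioc a b', ψ v * φ v s
          = ENNReal.ofReal (v / (Real.sqrt (v^2 - a^2) * Real.sqrt (b'^2 - v^2))) := by
        intro v hv
        have hv0 : 0 ≤ v / Real.sqrt (v^2 - a^2) :=
          div_nonneg (ha.trans hv.1).le (Real.sqrt_nonneg _)
        rw [hψ, hφ]
        simp only
        rw [← ENNReal.ofReal_mul hv0]
        congr 1
        rw [show (G s)^2 = b'^2 by rw [hb', neg_sq]]
        rw [div_mul_div_comm, mul_one]
      rw [setLIntegral_congr_fun_ae measurableSet_Ioc (ae_of_all _ hcong)]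
      rw [← ofReal_integral_eq_lintegral_ofReal ((aux_int ha hab').1)
        ((ae_restrict_iff' measurableSet_Ioc).mpr
          (ae_of_all _ fun v hv => div_nonneg (ha.trans hv.1).le (by positivity)))]
      congr 1
      rw [← intervalIntegral.integral_of_le hab'.le]
      exact aux_val ha hab'
    have houter : (∫⁻ s in Ioc 0 c, ∫⁻ v in Ioc a b, ψ v * φ v s)
        = ∫⁻ s in Ioc 0 c, ENNReal.ofReal (Real.pi/2) := by
      refine setLIntegral_congr_fun_ae measurableSet_Ioc ?_
      have hcnull : ∀ᵐ s : ℝ ∂volume, s ≠ c := by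
        rw [ae_iff]
        simp only [ne_eq, not_not, setOf_eq_eq_singleton]
        exact measure_singleton c
      filter_upwards [hcnull] with s hsne hs
      exact hsc s ⟨hs.1, lt_of_le_of_ne hs.2 hsne⟩
    rw [houter, setLIntegral_const, Real.volume_Ioc, sub_zero,
      ← ENNReal.ofReal_mul (by positivity)]
  have hfin : ∀ᵐ v ∂(volume.restrict (Ioc a b)), J v ≠ ⊤ := by
    have h1 : ∀ᵐ v ∂(volume.restrict (Ioc a b)), ψ v * J v < ⊤ :=
      ae_lt_top (measψ.mul measJ) (by rw [I2]; exact ENNReal.ofReal_ne_top)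
    filter_upwards [h1, ae_restrict_mem measurableSet_Ioc] with v hv hvm
    intro htop
    rw [htop] at hv
    have hψ0 : ψ v ≠ 0 := by
      rw [hψ]
      simp only [ne_eq, ENNReal.ofReal_eq_zero, not_le]
      have hva : 0 < v := ha.trans hvm.1
      have hs : 0 < Real.sqrt (v^2 - a^2) := Real.sqrt_pos.2 (by nlinarith [hvm.1])
      positivity
    rw [ENNReal.mul_top hψ0] at hv
    exact lt_irrefl _ hv
  have hIoc : (∫ v in a..b,
      (v / Real.sqrt (v ^ 2 - w ^ 2)) *
        ∫ s in (0:ℝ)..(Ginv (-v)), 1 / Real.sqrt ((G s) ^ 2 - v ^ 2)) = Real.pi/2 * c := by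
    rw [intervalIntegral.integral_of_le hab.le]
    have hcongr : (∫ v in Ioc a b,
        (v / Real.sqrt (v ^ 2 - w ^ 2)) *
          ∫ s in (0:ℝ)..(Ginv (-v)), 1 / Real.sqrt ((G s) ^ 2 - v ^ 2))
        = ∫ v in Ioc a b, (v / Real.sqrt (v^2 - a^2)) * (J v).toReal := by
      rw [setIntegral_congr_set (Ioo_ae_eq_Ioc (a := a) (b := b)).symm,
        setIntegral_congr_set (μ := volume) (Ioo_ae_eq_Ioc (a := a) (b := b)).symm]
      refine setIntegral_congr_fun measurableSet_Ioo fun v hv => ?_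
      rw [hinner v hv, hwa, neg_sq]
    rw [hcongr]
    have measg : Measurable (fun v => (v / Real.sqrt (v^2 - a^2)) * (J v).toReal) :=
      (by fun_prop : Measurable fun v : ℝ => v / Real.sqrt (v^2-a^2)).mul measJ.ennreal_toReal
    rw [integral_eq_lintegral_of_nonneg_ae
      ((ae_restrict_iff' measurableSet_Ioc).mpr (ae_of_all _ fun v hv =>
        mul_nonneg (div_nonneg (ha.trans hv.1).le (Real.sqrt_nonneg _)) ENNReal.toReal_nonneg))
      measg.aestronglyMeasurable]
    have heq2 : (∫⁻ v in Ioc a b,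
        ENNReal.ofReal ((v / Real.sqrt (v^2 - a^2)) * (J v).toReal))
        = ∫⁻ v in Ioc a b, ψ v * J v := by
      apply lintegral_congr_ae
      filter_upwards [hfin, ae_restrict_mem measurableSet_Ioc] with v hf hvm
      rw [ENNReal.ofReal_mul (div_nonneg (ha.trans hvm.1).le (Real.sqrt_nonneg _))]
      rw [ENNReal.ofReal_toReal hf, hψ]
    rw [heq2, I2, ENNReal.toReal_ofReal (by positivity)]
  rw [hIoc]
  field_simp

end Main
end

section
/- Let G be a pure-impulse profile of Klaus–Shaw type, and for 0 < v < −G(0) define the WKB phase integral Ψ̃(v) := (1/2) ∫_{s=0}^{G⁻¹(−v)} √(G(s)² − v²) ds. Then: (i) Ψ̃ is strictly decreasing on (0, −G(0)); (ii) Ψ̃(v) → (1/2)∫₀^∞ (−G(s)) ds (which equals one quarter of the L¹ norm of G) as v → 0⁺; and (iii) Ψ̃(v) → 0 as v → (−G(0))⁻. -/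
open MeasureTheory Real Filter

/-- The WKB phase integral `Ψ̃(v) = (1/2)∫₀^{G⁻¹(−v)} √(G(s)²−v²) ds` associated with
a pure-impulse Klaus–Shaw profile `G`. -/
noncomputable def wkbPhase (G Ginv : ℝ → ℝ) (v : ℝ) : ℝ :=
  (1 / 2) * ∫ s in (0 : ℝ)..(Ginv (-v)), Real.sqrt ((G s) ^ 2 - v ^ 2)

/-- For a pure-impulse Klaus–Shaw profile `G`, the WKB phase integral `Ψ̃` is
(i) strictly decreasing on `(0, −G(0))`,
(ii) tends to `(1/2)∫₀^∞ (−G(s)) ds` (one quarter of the `L¹` norm of `G`) as `v → 0⁺`, and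
(iii) tends to `0` as `v → (−G(0))⁻`. -/
theorem wkb_phase_monotone_and_limits
    (G Ginv : ℝ → ℝ)
    (hG_smooth : ContDiff ℝ 1 G)
    (hG_neg : ∀ x, G x < 0)
    (hG_even : ∀ x, G (-x) = G x)
    (hG_mono : StrictMonoOn G (Set.Ioi (0 : ℝ)))
    (hG_deriv : ∀ x, 0 < x → 0 < deriv G x)
    (hG_int : Integrable G)
    (hG_lim : Tendsto G atTop (nhds 0))
    (hGinv : ∀ w, G 0 < w → w < 0 → 0 < Ginv w ∧ G (Ginv w) = w) :
    StrictAntiOn (wkbPhase G Ginv) (Set.Ioo 0 (-(G 0))) ∧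
    Tendsto (wkbPhase G Ginv) (nhdsWithin 0 (Set.Ioi 0))
      (nhds ((1 / 2) * ∫ s in Set.Ioi (0 : ℝ), (-(G s)))) ∧
    (1 / 2) * (∫ s in Set.Ioi (0 : ℝ), (-(G s))) = (1 / 4) * ∫ x, |G x| ∧
    Tendsto (wkbPhase G Ginv) (nhdsWithin (-(G 0)) (Set.Iio (-(G 0)))) (nhds 0) := by
  have hGc : Continuous G := hG_smooth.continuous
  set c : ℝ := -(G 0) with hc
  have hc0 : 0 < c := by have := hG_neg 0; simp [hc]; linarith
  set f : ℝ → ℝ → ℝ := fun v s => Real.sqrt ((G s) ^ 2 - v ^ 2) with hf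
  -- basic bound
  have hbound : ∀ v s, |f v s| ≤ -G s := by
    intro v s
    have h1 : f v s ≤ Real.sqrt ((G s) ^ 2) := by
      apply Real.sqrt_le_sqrt; nlinarith [sq_nonneg v]
    have h2 : Real.sqrt ((G s) ^ 2) = -G s := by
      rw [Real.sqrt_sq_eq_abs, abs_of_neg (hG_neg s)]
    rw [abs_of_nonneg (Real.sqrt_nonneg _)]
    linarith
  have hmeas : ∀ v, AEStronglyMeasurable (f v) (volume.restrict (Set.Ioi (0:ℝ))) := by
    intro v
    exact ((Real.continuous_sqrt.comp ((hGc.pow 2).sub continuous_const)).aestronglyMeasurable)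
  have hnegG_int : IntegrableOn (fun s => -G s) (Set.Ioi (0:ℝ)) :=
    (hG_int.neg).integrableOn
  have hFi : ∀ v, IntegrableOn (f v) (Set.Ioi (0:ℝ)) := by
    intro v
    refine Integrable.mono hnegG_int (hmeas v) ?_
    filter_upwards with s
    have := hbound v s
    have h0 := hG_neg s
    simp only [Real.norm_eq_abs]
    rw [abs_of_nonneg (by linarith : (0:ℝ) ≤ -G s)]
    exact this
  -- key: on Ioo 0 c the interval integral equals the integral over Ioi 0
  have key : ∀ v ∈ Set.Ioo (0:ℝ) c, wkbPhase G Ginv v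
      = (1 / 2) * ∫ s in Set.Ioi (0:ℝ), f v s := by
    intro v hv
    obtain ⟨hv0, hvc⟩ := hv
    have h1 : G 0 < -v := by simp [hc] at hvc; linarith
    have h2 : -v < 0 := by linarith
    obtain ⟨ha, hGa⟩ := hGinv (-v) h1 h2
    set a := Ginv (-v) with hadef
    have hzero : ∀ s ∈ Set.Ioi a, f v s = 0 := by
      intro s hs
      have hs0 : (0:ℝ) < s := lt_trans ha hs
      have hGs : -v < G s := by
        have := hG_mono (Set.mem_Ioi.mpr ha) (Set.mem_Ioi.mpr hs0) hs
        rw [hGa] at this; exact this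
      have hGs0 := hG_neg s
      have : (G s) ^ 2 - v ^ 2 ≤ 0 := by nlinarith
      exact Real.sqrt_eq_zero_of_nonpos this
    have hsplit : Set.Ioi (0:ℝ) = Set.Ioc 0 a ∪ Set.Ioi a :=
      (Set.Ioc_union_Ioi_eq_Ioi ha.le).symm
    have hint1 : IntegrableOn (f v) (Set.Ioc 0 a) :=
      (hFi v).mono_set (by intro x hx; exact hx.1)
    have hint2 : IntegrableOn (f v) (Set.Ioi a) :=
      (hFi v).mono_set (fun x hx => lt_trans ha hx)
    have : (∫ s in Set.Ioi (0:ℝ), f v s)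
        = (∫ s in Set.Ioc 0 a, f v s) + ∫ s in Set.Ioi a, f v s := by
      rw [hsplit]
      exact setIntegral_union (Set.Ioc_disjoint_Ioi le_rfl) measurableSet_Ioi hint1 hint2
    have hz : (∫ s in Set.Ioi a, f v s) = 0 := by
      rw [setIntegral_congr_fun measurableSet_Ioi hzero]
      simp
    rw [wkbPhase, intervalIntegral.integral_of_le ha.le]
    rw [this, hz, add_zero]
  -- G 0 < G s for s > 0
  have hG0lt : ∀ s, 0 < s → G 0 < G s := by
    intro s hs
    have hhalf : (0:ℝ) < s / 2 := by linarith
    have hle : G 0 ≤ G (s / 2) := by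
      have htend : Tendsto G (nhdsWithin 0 (Set.Ioi 0)) (nhds (G 0)) :=
        (hGc.tendsto 0).mono_left nhdsWithin_le_nhds
      refine le_of_tendsto htend ?_
      filter_upwards [Ioo_mem_nhdsGT_of_mem (Set.mem_Ico.mpr ⟨le_rfl, hhalf⟩)] with t ht
      exact (hG_mono (Set.mem_Ioi.mpr ht.1) (Set.mem_Ioi.mpr hhalf) ht.2).le
    have hlt : G (s / 2) < G s :=
      hG_mono (Set.mem_Ioi.mpr hhalf) (Set.mem_Ioi.mpr hs) (by linarith)
    linarith
  refine ⟨?_, ?_, ?_, ?_⟩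
  · -- strict antitone
    intro v₁ hv₁ v₂ hv₂ h12
    rw [key v₁ hv₁, key v₂ hv₂]
    have hv₁0 := hv₁.1
    have hv₂0 := hv₂.1
    obtain ⟨ha₂, hGa₂⟩ := hGinv (-v₂) (by have := hv₂.2; simp [hc] at this; linarith)
      (by linarith)
    set a₂ := Ginv (-v₂) with ha₂def
    have hmono : ∀ s, f v₂ s ≤ f v₁ s := by
      intro s
      apply Real.sqrt_le_sqrt
      nlinarith
    have hstrict : ∀ s ∈ Set.Ioo (0:ℝ) a₂, f v₂ s < f v₁ s := by
      intro s hs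
      have hGs : G s < -v₂ := by
        have := hG_mono (Set.mem_Ioi.mpr hs.1) (Set.mem_Ioi.mpr ha₂) hs.2
        rw [hGa₂] at this; exact this
      have hpos : 0 ≤ (G s) ^ 2 - v₂ ^ 2 := by nlinarith
      apply Real.sqrt_lt_sqrt hpos
      nlinarith
    have hsub : (0:ℝ) < ∫ s in Set.Ioi (0:ℝ), (f v₁ s - f v₂ s) := by
      rw [setIntegral_pos_iff_support_of_nonneg_ae]
      · refine lt_of_lt_of_le (b := volume (Set.Ioo (0:ℝ) a₂)) ?_ (measure_mono ?_)
        · rw [Real.volume_Ioo]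
          simp [ha₂]
        · intro s hs
          constructor
          · have := hstrict s hs
            simp only [Function.mem_support]
            intro h; rw [sub_eq_zero] at h; exact absurd h (ne_of_gt this)
          · exact Set.mem_Ioi.mpr hs.1
      · filter_upwards with s
        have := hmono s; simp; linarith
      · exact (hFi v₁).sub (hFi v₂)
    have := integral_sub (hFi v₁) (hFi v₂)
    rw [this] at hsub
    have h2 : (∫ s in Set.Ioi (0:ℝ), f v₂ s) < ∫ s in Set.Ioi (0:ℝ), f v₁ s := by linarith
    linarith
  · -- limit as v → 0⁺
    have hev : ∀ᶠ v in nhdsWithin (0:ℝ) (Set.Ioi 0),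
        wkbPhase G Ginv v = (1/2) * ∫ s in Set.Ioi (0:ℝ), f v s := by
      filter_upwards [Ioo_mem_nhdsGT_of_mem (Set.mem_Ico.mpr ⟨le_rfl, hc0⟩)] with v hv
      exact key v hv
    have hT : Tendsto (fun v => ∫ s in Set.Ioi (0:ℝ), f v s)
        (nhdsWithin (0:ℝ) (Set.Ioi 0)) (nhds (∫ s in Set.Ioi (0:ℝ), (-(G s)))) := by
      apply tendsto_integral_filter_of_dominated_convergence (fun s => -G s)
      · filter_upwards with v; exact hmeas v
      · filter_upwards with v
        filter_upwards with s
        simpa [Real.norm_eq_abs] using hbound v s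
      · exact hnegG_int
      · filter_upwards with s
        have hcont : ContinuousAt (fun v : ℝ => Real.sqrt ((G s) ^ 2 - v ^ 2)) 0 :=
          Real.continuous_sqrt.continuousAt.comp
            ((continuousAt_const.sub (continuousAt_pow _ 2)))
        have heval : Real.sqrt ((G s) ^ 2 - (0:ℝ) ^ 2) = -G s := by
          rw [show (G s) ^ 2 - (0:ℝ) ^ 2 = (G s) ^ 2 by ring,
            Real.sqrt_sq_eq_abs, abs_of_neg (hG_neg s)]
        have := hcont.tendsto
        rw [heval] at this
        exact this.mono_left nhdsWithin_le_nhds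
    exact (hT.const_mul (1/2 : ℝ)).congr' (by filter_upwards [hev] with v h; exact h.symm)
  · -- the half/quarter identity
    have habs : ∀ x : ℝ, |G x| = -G x := fun x => abs_of_neg (hG_neg x)
    have hsplitR : (∫ x, |G x|) = (∫ x in Set.Iic (0:ℝ), |G x|) + ∫ x in Set.Ioi (0:ℝ), |G x| := by
      rw [← setIntegral_union (Set.Iic_disjoint_Ioi le_rfl) measurableSet_Ioi
        (hG_int.abs).integrableOn (hG_int.abs).integrableOn]
      rw [Set.Iic_union_Ioi]
      simp [Measure.restrict_univ]
    have hevenabs : ∀ x : ℝ, |G (-x)| = |G x| := fun x => by rw [hG_even]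
    have hIic : (∫ x in Set.Iic (0:ℝ), |G x|) = ∫ x in Set.Ioi (0:ℝ), |G x| := by
      have h1 : (∫ x in Set.Ioi (0:ℝ), |G (-x)|) = ∫ x in Set.Iic (-(0:ℝ)), |G x| :=
        integral_comp_neg_Ioi (0:ℝ) (fun x => |G x|)
      simp only [neg_zero] at h1
      rw [← h1]
      exact setIntegral_congr_fun measurableSet_Ioi (fun x _ => hevenabs x)
    rw [hsplitR, hIic]
    have : (∫ x in Set.Ioi (0:ℝ), |G x|) = ∫ s in Set.Ioi (0:ℝ), (-(G s)) :=
      setIntegral_congr_fun measurableSet_Ioi (fun x _ => habs x)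
    rw [this]; ring
  · -- limit as v → c⁻
    have hev : ∀ᶠ v in nhdsWithin c (Set.Iio c),
        wkbPhase G Ginv v = (1/2) * ∫ s in Set.Ioi (0:ℝ), f v s := by
      filter_upwards [Ioo_mem_nhdsLT_of_mem (Set.mem_Ioc.mpr ⟨hc0, le_rfl⟩)] with v hv
      exact key v hv
    have hT : Tendsto (fun v => ∫ s in Set.Ioi (0:ℝ), f v s)
        (nhdsWithin c (Set.Iio c)) (nhds (∫ s in Set.Ioi (0:ℝ), (0:ℝ))) := by
      apply tendsto_integral_filter_of_dominated_convergence (fun s => -G s)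
      · filter_upwards with v; exact hmeas v
      · filter_upwards with v
        filter_upwards with s
        simpa [Real.norm_eq_abs] using hbound v s
      · exact hnegG_int
      · filter_upwards [ae_restrict_mem measurableSet_Ioi] with s hs
        have hs0 : (0:ℝ) < s := hs
        have hcont : ContinuousAt (fun v : ℝ => Real.sqrt ((G s) ^ 2 - v ^ 2)) c :=
          Real.continuous_sqrt.continuousAt.comp
            ((continuousAt_const.sub (continuousAt_pow _ 2)))
        have heval : Real.sqrt ((G s) ^ 2 - c ^ 2) = 0 := by
          apply Real.sqrt_eq_zero_of_nonpos
          have h1 : G 0 < G s := hG0lt s hs0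
          have h2 := hG_neg s
          simp only [hc]
          nlinarith
        have := hcont.tendsto
        rw [heval] at this
        exact this.mono_left nhdsWithin_le_nhds
    have h0 : (∫ s in Set.Ioi (0:ℝ), (0:ℝ)) = 0 := by simp
    rw [h0] at hT
    have := (hT.const_mul (1/2 : ℝ)).congr' (by filter_upwards [hev] with v h; exact h.symm)
    simpa using this
end

section
/- Let A > 0. For every v with 0 < v < 4A, setting x₊ := arccosh(4A/v) (the unique positive solution of 4A·sech(x₊) = v), the WKB phase integral for the Satsuma–Yajima impulse profile G(x) = −4A·sech(x) evaluates in closed form: (1/2) ∫_{s=0}^{x₊} √(16A²·sech(s)² − v²) ds = π·A − π·v/4. -/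
open MeasureTheory Real

set_option maxHeartbeats 1000000 in
/-- **Closed form of the WKB phase integral for the Satsuma–Yajima profile.**
For `G(x) = −4A sech(x)` with `A > 0` and `0 < v < 4A`, letting `xp = arccosh(4A/v)` be the
unique positive solution of `4A·sech(xp) = v`, one has
`(1/2)∫₀^{xp} √(16A² sech(s)² − v²) ds = πA − πv/4`. -/
theorem wkb_phase_sech_profile
    (A v xp : ℝ) (hA : 0 < A) (hv₀ : 0 < v) (hv₁ : v < 4 * A)
    (hxp_pos : 0 < xp) (hxp : 4 * A * (1 / Real.cosh xp) = v) :
    (1 / 2) * ∫ s in (0 : ℝ)..xp, Real.sqrt (16 * A ^ 2 * (1 / Real.cosh s) ^ 2 - v ^ 2)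
      = Real.pi * A - Real.pi * v / 4 := by
  set a : ℝ := 4 * A with ha_def
  have ha : 0 < a := by positivity
  set b : ℝ := Real.sqrt (a ^ 2 - v ^ 2) with hb_def
  have hb2 : b ^ 2 = a ^ 2 - v ^ 2 := Real.sq_sqrt (by nlinarith)
  have hb : 0 < b := Real.sqrt_pos.mpr (by nlinarith)
  -- cosh xp = a / v
  have hcxp : Real.cosh xp = a / v := by
    have hcp : (0:ℝ) < Real.cosh xp := Real.cosh_pos xp
    field_simp at hxp ⊢
    linarith [hxp]
  -- sinh xp = b / v
  have hsxp : Real.sinh xp = b / v := by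
    have h1 : Real.sinh xp ^ 2 = (b / v) ^ 2 := by
      have := Real.cosh_sq_sub_sinh_sq xp
      rw [hcxp] at this
      field_simp at this ⊢
      nlinarith [this, hb2]
    have h2 : 0 < Real.sinh xp := Real.sinh_pos_iff.mpr hxp_pos
    have h3 : 0 < b / v := by positivity
    nlinarith [h1, h2, h3]
  -- the antiderivative
  set F : ℝ → ℝ := fun x =>
    a * Real.arcsin ((a / b) * (Real.sinh x / Real.cosh x))
      - v * Real.arcsin ((v / b) * Real.sinh x) with hF_def
  set f : ℝ → ℝ := fun s => Real.sqrt (16 * A ^ 2 * (1 / Real.cosh s) ^ 2 - v ^ 2) with hf_def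
  have hcont_f : Continuous f := by
    apply Real.continuous_sqrt.comp
    fun_prop (disch := exact fun x => (Real.cosh_pos x).ne')
  have hcont_F : Continuous F := by
    apply Continuous.sub
    · exact continuous_const.mul (Real.continuous_arcsin.comp
        (continuous_const.mul (Real.continuous_sinh.div Real.continuous_cosh
          fun x => (Real.cosh_pos x).ne')))
    · exact continuous_const.mul (Real.continuous_arcsin.comp
        (continuous_const.mul Real.continuous_sinh))
  have key : ∀ x ∈ Set.Ioo (0:ℝ) xp, HasDerivAt F (f x) x := by
    intro x hx
    obtain ⟨hx0, hxlt⟩ := hx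
    set c : ℝ := Real.cosh x with hc_def
    set s : ℝ := Real.sinh x with hs_def
    have hc1 : 1 ≤ c := Real.one_le_cosh x
    have hc0 : 0 < c := lt_of_lt_of_le one_pos hc1
    have hs0 : 0 < s := Real.sinh_pos_iff.mpr hx0
    have hcs : c ^ 2 - s ^ 2 = 1 := Real.cosh_sq_sub_sinh_sq x
    have hclt : c < a / v := by
      rw [← hcxp]
      exact Real.cosh_lt_cosh.mpr (by rw [abs_of_pos hx0, abs_of_pos hxp_pos]; exact hxlt)
    have hvc : v * c < a := by
      have h := (lt_div_iff₀ hv₀).mp hclt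
      linarith [h, mul_comm c v]
    have hR2 : 0 < a ^ 2 - v ^ 2 * c ^ 2 := by
      nlinarith [mul_pos (sub_pos.mpr hvc) (add_pos ha (mul_pos hv₀ hc0))]
    set R : ℝ := Real.sqrt (a ^ 2 - v ^ 2 * c ^ 2) with hR_def
    have hRsq : R ^ 2 = a ^ 2 - v ^ 2 * c ^ 2 := Real.sq_sqrt hR2.le
    have hR : 0 < R := Real.sqrt_pos.mpr hR2
    -- derivative of sinh/cosh
    have hq : HasDerivAt (fun y => Real.sinh y / Real.cosh y) (1 / c ^ 2) x := by
      have h := (Real.hasDerivAt_sinh x).div (Real.hasDerivAt_cosh x) hc0.ne'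
      refine h.congr_deriv ?_
      rw [← hc_def, ← hs_def, show c * c - s * s = 1 by nlinarith [hcs]]
    -- first arcsin term
    set u : ℝ := (a / b) * (s / c) with hu_def
    have hu_nonneg : 0 ≤ u := by
      rw [hu_def]
      exact mul_nonneg (div_nonneg ha.le hb.le) (div_nonneg hs0.le hc0.le)
    have hu_sq : u ^ 2 < 1 := by
      rw [hu_def]
      rw [div_mul_div_comm, div_pow, div_lt_one (pow_pos (mul_pos hb hc0) 2)]
      have : (a * s) ^ 2 = a ^ 2 * (c ^ 2 - 1) := by nlinarith [hcs]
      nlinarith [hb2, hR2]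
    have hu_lt : u < 1 := by nlinarith [hu_sq, hu_nonneg]
    have hu_gt : -1 < u := by linarith
    have hd1 : HasDerivAt (fun y => Real.arcsin ((a / b) * (Real.sinh y / Real.cosh y)))
        (1 / Real.sqrt (1 - u ^ 2) * ((a / b) * (1 / c ^ 2))) x := by
      exact (Real.hasDerivAt_arcsin hu_gt.ne' hu_lt.ne).comp x (hq.const_mul (a / b))
    -- second arcsin term
    set w : ℝ := (v / b) * s with hw_def
    have hw_nonneg : 0 ≤ w := by
      rw [hw_def]
      exact mul_nonneg (div_nonneg hv₀.le hb.le) hs0.le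
    have hw_sq : w ^ 2 < 1 := by
      rw [hw_def, mul_pow, div_pow, div_mul_eq_mul_div, div_lt_one (pow_pos hb 2)]
      nlinarith [hb2, hR2, hcs]
    have hw_lt : w < 1 := by nlinarith [hw_sq, hw_nonneg]
    have hw_gt : -1 < w := by linarith
    have hd2 : HasDerivAt (fun y => Real.arcsin ((v / b) * Real.sinh y))
        (1 / Real.sqrt (1 - w ^ 2) * ((v / b) * c)) x := by
      exact (Real.hasDerivAt_arcsin hw_gt.ne' hw_lt.ne).comp x
        ((Real.hasDerivAt_sinh x).const_mul (v / b))
    -- combine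
    have hD : HasDerivAt F
        (a * (1 / Real.sqrt (1 - u ^ 2) * ((a / b) * (1 / c ^ 2)))
          - v * (1 / Real.sqrt (1 - w ^ 2) * ((v / b) * c))) x :=
      (hd1.const_mul a).sub (hd2.const_mul v)
    -- simplify square roots
    have hsqrt1 : Real.sqrt (1 - u ^ 2) = R / (b * c) := by
      have : 1 - u ^ 2 = (R / (b * c)) ^ 2 := by
        rw [hu_def, div_pow, hRsq]
        field_simp
        linear_combination (c^2 - s^2) * hb2 + (a^2 - v^2*c^2 - b^2) * hcs + b^2*hcs
          + v^2*c^2*hcs + s^2*hb2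
      rw [this, Real.sqrt_sq (div_nonneg hR.le (mul_pos hb hc0).le)]
    have hsqrt2 : Real.sqrt (1 - w ^ 2) = R / b := by
      have : 1 - w ^ 2 = (R / b) ^ 2 := by
        rw [hw_def, div_pow, hRsq]
        field_simp
        linear_combination hb2 + v^2*hcs
      rw [this, Real.sqrt_sq (div_nonneg hR.le hb.le)]
    have hfx : f x = R / c := by
      have e : (R / c) ^ 2 = 16 * A ^ 2 * (1 / Real.cosh x) ^ 2 - v ^ 2 := by
        rw [div_pow, hRsq, ← hc_def, ha_def]
        field_simp
        ring
      show Real.sqrt (16 * A ^ 2 * (1 / Real.cosh x) ^ 2 - v ^ 2) = R / c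
      rw [← e, Real.sqrt_sq (div_nonneg hR.le hc0.le)]
    rw [hfx]
    convert hD using 1
    rw [hsqrt1, hsqrt2]
    field_simp
    linear_combination hRsq
  -- apply FTC
  have hxp_le : (0:ℝ) ≤ xp := hxp_pos.le
  have hint : IntervalIntegrable f volume 0 xp := hcont_f.intervalIntegrable 0 xp
  have hFTC : ∫ s in (0:ℝ)..xp, f s = F xp - F 0 :=
    intervalIntegral.integral_eq_sub_of_hasDeriv_right_of_le hxp_le
      hcont_F.continuousOn
      (fun x hx => (key x hx).hasDerivWithinAt) hint
  have hF0 : F 0 = 0 := by simp [hF_def]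
  have hFxp : F xp = a * (Real.pi / 2) - v * (Real.pi / 2) := by
    show a * Real.arcsin ((a / b) * (Real.sinh xp / Real.cosh xp))
        - v * Real.arcsin ((v / b) * Real.sinh xp) = _
    have h1 : (a / b) * (Real.sinh xp / Real.cosh xp) = 1 := by
      rw [hsxp, hcxp]; field_simp
    have h2 : (v / b) * Real.sinh xp = 1 := by
      rw [hsxp]; field_simp
    rw [h1, h2, Real.arcsin_one]
  rw [show (∫ s in (0:ℝ)..xp, Real.sqrt (16 * A ^ 2 * (1 / Real.cosh s) ^ 2 - v ^ 2))
      = ∫ s in (0:ℝ)..xp, f s from rfl, hFTC, hF0, hFxp, ha_def]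
  ring
end

section
/- For every ℰ with −1 < ℰ < 1, the librational averaged integral evaluates in closed form in terms of complete elliptic integrals: (√2/π) ∫_{φ=−arccos(−ℰ)}^{arccos(−ℰ)} √(cos φ + ℰ) dφ = (8/π)·E((1+ℰ)/2) − (4/π)·(1−ℰ)·K((1+ℰ)/2). -/
open MeasureTheory Real

/-- The complete elliptic integral of the first kind,
`K(m) = ∫₀¹ ds/(√(1−s²)·√(1−m s²))`. -/
noncomputable def ellipticK (m : ℝ) : ℝ :=
  ∫ s in (0 : ℝ)..1, 1 / (Real.sqrt (1 - s ^ 2) * Real.sqrt (1 - m * s ^ 2))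

/-- The complete elliptic integral of the second kind,
`E(m) = ∫₀¹ √(1−m s²)/√(1−s²) ds`. -/
noncomputable def ellipticE (m : ℝ) : ℝ :=
  ∫ s in (0 : ℝ)..1, Real.sqrt (1 - m * s ^ 2) / Real.sqrt (1 - s ^ 2)

section AuxLib
variable {m : ℝ}


lemma denom_pos (hm0 : 0 ≤ m) (hm1 : m < 1) {s : ℝ} (hs : s ∈ Set.Icc (-1:ℝ) 1) :
    0 < 1 - m * s ^ 2 := by
  have h1 : s ^ 2 ≤ 1 := by
    rw [← one_pow 2]
    exact sq_le_sq' hs.1 hs.2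
  nlinarith

lemma contOn_h (hm0 : 0 ≤ m) (hm1 : m < 1) :
    ContinuousOn (fun s : ℝ => Real.sqrt (1 - s ^ 2) / Real.sqrt (1 - m * s ^ 2))
      (Set.Icc (-1:ℝ) 1) := by
  apply ContinuousOn.div
  · fun_prop
  · fun_prop
  · intro s hs
    exact (Real.sqrt_pos.2 (denom_pos hm0 hm1 hs)).ne'

/-- Integrability of the `K` integrand on `[0,1]`. -/
lemma intervalIntegrable_Kint (hm0 : 0 ≤ m) (hm1 : m < 1) :
    IntervalIntegrable
      (fun s : ℝ => 1 / (Real.sqrt (1 - s ^ 2) * Real.sqrt (1 - m * s ^ 2)))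
      volume 0 1 := by
  have hbase : IntervalIntegrable (fun x : ℝ => x ^ (-(1/2) : ℝ)) volume 0 1 :=
    intervalIntegral.intervalIntegrable_rpow' (by norm_num)
  have hF : IntervalIntegrable (fun x : ℝ => (1 - x) ^ (-(1/2) : ℝ)) volume 0 1 := by
    have := hbase.comp_sub_left 1
    exact (by simpa using this : IntervalIntegrable _ volume 1 0).symm
  have hF' : IntervalIntegrable
      (fun x : ℝ => (1 / Real.sqrt (1 - m)) * (1 - x) ^ (-(1/2) : ℝ)) volume 0 1 :=
    hF.const_mul _
  apply hF'.mono_fun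
  · apply Measurable.aestronglyMeasurable
    fun_prop
  · filter_upwards [MeasureTheory.ae_restrict_mem measurableSet_uIoc] with s hs
    have hs' : s ∈ Set.Ioc (0:ℝ) 1 := by
      simpa [Set.uIoc_of_le (by norm_num : (0:ℝ) ≤ 1)] using hs
    have h0 : (0:ℝ) < s := hs'.1
    have h1 : s ≤ 1 := hs'.2
    have hmpos : 0 < 1 - m := by linarith
    have hsq : s ^ 2 ≤ 1 := by nlinarith
    have hBge : Real.sqrt (1 - m) ≤ Real.sqrt (1 - m * s ^ 2) := by
      apply Real.sqrt_le_sqrt; nlinarith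
    have hBpos : 0 < Real.sqrt (1 - m * s ^ 2) :=
      lt_of_lt_of_le (Real.sqrt_pos.2 hmpos) hBge
    have hAge : Real.sqrt (1 - s) ≤ Real.sqrt (1 - s ^ 2) := by
      apply Real.sqrt_le_sqrt; nlinarith
    rcases eq_or_lt_of_le h1 with rfl | h1'
    · norm_num [Real.zero_rpow]
    · have hrw : (1 - s) ^ (-(1/2) : ℝ) = 1 / Real.sqrt (1 - s) := by
        rw [Real.rpow_neg (by linarith : (0:ℝ) ≤ 1 - s), ← Real.sqrt_eq_rpow, one_div]
      have hApos : 0 < Real.sqrt (1 - s ^ 2) := Real.sqrt_pos.2 (by nlinarith)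
      have hAspos : 0 < Real.sqrt (1 - s) := Real.sqrt_pos.2 (by linarith)
      rw [hrw, Real.norm_eq_abs, Real.norm_eq_abs, abs_of_nonneg (by positivity),
        abs_of_nonneg (by positivity)]
      rw [div_mul_div_comm, one_mul]
      apply one_div_le_one_div_of_le
      · exact mul_pos (Real.sqrt_pos.2 hmpos) hAspos
      · rw [mul_comm (Real.sqrt (1 - s ^ 2))]
        exact mul_le_mul hBge hAge (Real.sqrt_nonneg _) hBpos.le



lemma pointwise_identity (hm0 : 0 ≤ m) (hm1 : m < 1) {s : ℝ} (hs : s ∈ Set.Icc (0:ℝ) 1) :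
    Real.sqrt (1 - m * s ^ 2) / Real.sqrt (1 - s ^ 2)
      = m * (Real.sqrt (1 - s ^ 2) / Real.sqrt (1 - m * s ^ 2))
        + (1 - m) * (1 / (Real.sqrt (1 - s ^ 2) * Real.sqrt (1 - m * s ^ 2))) := by
  have hB2 : Real.sqrt (1 - m * s ^ 2) ^ 2 = 1 - m * s ^ 2 :=
    Real.sq_sqrt (denom_pos hm0 hm1 ⟨by linarith [hs.1], hs.2⟩).le
  have hBpos : 0 < Real.sqrt (1 - m * s ^ 2) :=
    Real.sqrt_pos.2 (denom_pos hm0 hm1 ⟨by linarith [hs.1], hs.2⟩)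
  rcases eq_or_lt_of_le hs.2 with rfl | h1
  · norm_num
  · have hApos : 0 < Real.sqrt (1 - s ^ 2) :=
      Real.sqrt_pos.2 (by nlinarith [hs.1])
    have hA2 : Real.sqrt (1 - s ^ 2) ^ 2 = 1 - s ^ 2 :=
      Real.sq_sqrt (by nlinarith [hs.1])
    field_simp
    linear_combination hB2 - m * hA2

lemma E_sub_K (hm0 : 0 ≤ m) (hm1 : m < 1) :
    ellipticE m - (1 - m) * ellipticK m
      = m * ∫ s in (0:ℝ)..1, Real.sqrt (1 - s ^ 2) / Real.sqrt (1 - m * s ^ 2) := by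
  have hhint : IntervalIntegrable
      (fun s : ℝ => Real.sqrt (1 - s ^ 2) / Real.sqrt (1 - m * s ^ 2)) volume 0 1 := by
    apply ContinuousOn.intervalIntegrable
    apply (contOn_h hm0 hm1).mono
    rw [Set.uIcc_of_le (by norm_num : (0:ℝ) ≤ 1)]
    exact Set.Icc_subset_Icc (by norm_num) le_rfl
  have hkint := intervalIntegrable_Kint hm0 hm1
  have hcong : ellipticE m
      = ∫ s in (0:ℝ)..1,
          (m * (Real.sqrt (1 - s ^ 2) / Real.sqrt (1 - m * s ^ 2))
            + (1 - m) * (1 / (Real.sqrt (1 - s ^ 2) * Real.sqrt (1 - m * s ^ 2)))) := by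
    apply intervalIntegral.integral_congr
    intro s hs
    rw [Set.uIcc_of_le (by norm_num : (0:ℝ) ≤ 1)] at hs
    exact pointwise_identity hm0 hm1 hs
  rw [ellipticK, hcong,
    intervalIntegral.integral_add (hhint.const_mul m) (hkint.const_mul (1 - m)),
    intervalIntegral.integral_const_mul, intervalIntegral.integral_const_mul]
  ring

lemma hasDerivAt_subst (hm0 : 0 ≤ m) (hm1 : m < 1) {x : ℝ} (hx : x ∈ Set.Icc (-1:ℝ) 1) :
    HasDerivAt (fun s : ℝ => 2 * Real.arcsin (Real.sqrt m * s))
      (2 * (Real.sqrt m / Real.sqrt (1 - m * x ^ 2))) x := by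
  have hr1 : Real.sqrt m < 1 := by
    rw [← Real.sqrt_one]; exact Real.sqrt_lt_sqrt hm0 hm1
  have hu : |Real.sqrt m * x| < 1 := by
    rw [abs_mul, abs_of_nonneg (Real.sqrt_nonneg m)]
    calc Real.sqrt m * |x| ≤ Real.sqrt m * 1 :=
          mul_le_mul_of_nonneg_left (abs_le.2 ⟨hx.1, hx.2⟩) (Real.sqrt_nonneg m)
      _ < 1 := by linarith
  have hu' := abs_lt.1 hu
  have h1 : HasDerivAt Real.arcsin (1 / Real.sqrt (1 - (Real.sqrt m * x) ^ 2))
      (Real.sqrt m * x) := Real.hasDerivAt_arcsin (by linarith) (by linarith)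
  have h2 : HasDerivAt (fun s : ℝ => Real.sqrt m * s) (Real.sqrt m) x := by
    simpa using (hasDerivAt_id x).const_mul (Real.sqrt m)
  have h3 := (h1.comp x h2).const_mul (2 : ℝ)
  have harg : (Real.sqrt m * x) ^ 2 = m * x ^ 2 := by
    rw [mul_pow, Real.sq_sqrt hm0]
  refine h3.congr_deriv ?_
  rw [harg]
  ring

end AuxLib

/-- **Closed form of the librational averaged integral.** For `−1 < ℰ < 1`,
`(√2/π) ∫_{−arccos(−ℰ)}^{arccos(−ℰ)} √(cos φ + ℰ) dφ
  = (8/π) E((1+ℰ)/2) − (4/π)(1−ℰ) K((1+ℰ)/2)`. -/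
theorem librational_average_closed_form (E : ℝ) (hE₁ : -1 < E) (hE₂ : E < 1) :
    (Real.sqrt 2 / Real.pi) *
        ∫ φ in (-(Real.arccos (-E)))..(Real.arccos (-E)), Real.sqrt (Real.cos φ + E)
      = (8 / Real.pi) * ellipticE ((1 + E) / 2)
          - (4 / Real.pi) * (1 - E) * ellipticK ((1 + E) / 2) := by
  set m : ℝ := (1 + E) / 2 with hm_def
  have hm0 : 0 < m := by simp only [hm_def]; linarith
  have hm1 : m < 1 := by simp only [hm_def]; linarith
  set a : ℝ := Real.arccos (-E) with ha_def
  have ha0 : 0 ≤ a := Real.arccos_nonneg _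
  have hapi : a ≤ π := Real.arccos_le_pi _
  have hcos : Real.cos a = -E := Real.cos_arccos (by linarith) (by linarith)
  -- sin (a/2) = √m
  have hsin : Real.sin (a / 2) = Real.sqrt m := by
    have hsq : Real.sin (a / 2) ^ 2 = m := by
      have h := Real.cos_two_mul (a / 2)
      rw [Real.cos_sq'] at h
      rw [show 2 * (a / 2) = a by ring, hcos] at h
      simp only [hm_def]; linarith
    have hnn : 0 ≤ Real.sin (a / 2) :=
      Real.sin_nonneg_of_nonneg_of_le_pi (by linarith) (by linarith [Real.pi_pos])
    rw [← hsq, Real.sqrt_sq hnn]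
  have hpi2 : a / 2 ≤ π / 2 := by linarith
  have hg1 : 2 * Real.arcsin (Real.sqrt m * 1) = a := by
    rw [mul_one, ← hsin, Real.arcsin_sin (by linarith [Real.pi_pos]) hpi2]; ring
  have hgm1 : 2 * Real.arcsin (Real.sqrt m * (-1)) = -a := by
    rw [mul_neg_one, Real.arcsin_neg, ← hsin,
      Real.arcsin_sin (by linarith [Real.pi_pos]) hpi2]; ring
  -- substitution
  have hcontf' : ContinuousOn (fun s : ℝ => 2 * (Real.sqrt m / Real.sqrt (1 - m * s ^ 2)))
      (Set.uIcc (-1:ℝ) 1) := by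
    rw [Set.uIcc_of_le (by norm_num : (-1:ℝ) ≤ 1)]
    apply ContinuousOn.mul continuousOn_const
    apply ContinuousOn.div continuousOn_const (by fun_prop)
    intro s hs
    exact (Real.sqrt_pos.2 (denom_pos hm0.le hm1 hs)).ne'
  have hsub := intervalIntegral.integral_comp_smul_deriv
    (f := fun s : ℝ => 2 * Real.arcsin (Real.sqrt m * s))
    (f' := fun s : ℝ => 2 * (Real.sqrt m / Real.sqrt (1 - m * s ^ 2)))
    (g := fun φ : ℝ => Real.sqrt (Real.cos φ + E))
    (a := -1) (b := 1)
    (fun x hx => hasDerivAt_subst hm0.le hm1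
      (by rwa [Set.uIcc_of_le (by norm_num : (-1:ℝ) ≤ 1)] at hx))
    hcontf' (by fun_prop)
  simp only [Function.comp_apply] at hsub
  rw [hg1, hgm1] at hsub
  -- simplify the substituted integrand
  have hcong : ∫ x in (-1:ℝ)..1,
        (2 * (Real.sqrt m / Real.sqrt (1 - m * x ^ 2))) •
          Real.sqrt (Real.cos (2 * Real.arcsin (Real.sqrt m * x)) + E)
      = ∫ x in (-1:ℝ)..1,
          (2 * Real.sqrt 2 * m) * (Real.sqrt (1 - x ^ 2) / Real.sqrt (1 - m * x ^ 2)) := by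
    apply intervalIntegral.integral_congr
    intro s hs
    rw [Set.uIcc_of_le (by norm_num : (-1:ℝ) ≤ 1)] at hs
    have hr1 : Real.sqrt m < 1 := by
      rw [← Real.sqrt_one]; exact Real.sqrt_lt_sqrt hm0.le hm1
    have hu : |Real.sqrt m * s| ≤ 1 := by
      rw [abs_mul, abs_of_nonneg (Real.sqrt_nonneg m)]
      calc Real.sqrt m * |s| ≤ Real.sqrt m * 1 :=
            mul_le_mul_of_nonneg_left (abs_le.2 ⟨hs.1, hs.2⟩) (Real.sqrt_nonneg m)
        _ ≤ 1 := by linarith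
    have hu' := abs_le.1 hu
    have hcos2 : Real.cos (2 * Real.arcsin (Real.sqrt m * s)) + E = 2 * m * (1 - s ^ 2) := by
      rw [Real.cos_two_mul, Real.cos_arcsin,
        Real.sq_sqrt (by nlinarith [sq_abs (Real.sqrt m * s), sq_nonneg (Real.sqrt m * s)] :
          (0:ℝ) ≤ 1 - (Real.sqrt m * s) ^ 2)]
      have : (Real.sqrt m * s) ^ 2 = m * s ^ 2 := by
        rw [mul_pow, Real.sq_sqrt hm0.le]
      rw [this]
      simp only [hm_def]; ring
    simp only [smul_eq_mul]
    rw [hcos2]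
    have hfac : Real.sqrt (2 * m * (1 - s ^ 2)) = Real.sqrt (2 * m) * Real.sqrt (1 - s ^ 2) :=
      Real.sqrt_mul (by positivity) _
    rw [hfac]
    have hkey : Real.sqrt m * Real.sqrt (2 * m) = Real.sqrt 2 * m := by
      rw [← Real.sqrt_mul hm0.le, show m * (2 * m) = 2 * m ^ 2 by ring,
        Real.sqrt_mul (by norm_num : (0:ℝ) ≤ 2), Real.sqrt_sq hm0.le]
    have hBne : Real.sqrt (1 - m * s ^ 2) ≠ 0 :=
      (Real.sqrt_pos.2 (denom_pos hm0.le hm1 hs)).ne'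
    rw [show 2 * (Real.sqrt m / Real.sqrt (1 - m * s ^ 2))
          * (Real.sqrt (2 * m) * Real.sqrt (1 - s ^ 2))
        = 2 * (Real.sqrt m * Real.sqrt (2 * m)) * Real.sqrt (1 - s ^ 2)
            / Real.sqrt (1 - m * s ^ 2) from by ring, hkey]
    ring
  -- evenness
  have hint01 : IntervalIntegrable
      (fun s : ℝ => Real.sqrt (1 - s ^ 2) / Real.sqrt (1 - m * s ^ 2)) volume 0 1 := by
    apply ContinuousOn.intervalIntegrable
    apply (contOn_h hm0.le hm1).mono
    rw [Set.uIcc_of_le (by norm_num : (0:ℝ) ≤ 1)]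
    exact Set.Icc_subset_Icc (by norm_num) le_rfl
  have hintm10 : IntervalIntegrable
      (fun s : ℝ => Real.sqrt (1 - s ^ 2) / Real.sqrt (1 - m * s ^ 2)) volume (-1) 0 := by
    apply ContinuousOn.intervalIntegrable
    apply (contOn_h hm0.le hm1).mono
    rw [Set.uIcc_of_le (by norm_num : (-1:ℝ) ≤ 0)]
    exact Set.Icc_subset_Icc le_rfl (by norm_num)
  have heven : ∫ s in (-1:ℝ)..1, Real.sqrt (1 - s ^ 2) / Real.sqrt (1 - m * s ^ 2)
      = 2 * ∫ s in (0:ℝ)..1, Real.sqrt (1 - s ^ 2) / Real.sqrt (1 - m * s ^ 2) := by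
    rw [← intervalIntegral.integral_add_adjacent_intervals hintm10 hint01]
    have hneg : ∫ s in (-1:ℝ)..0, Real.sqrt (1 - s ^ 2) / Real.sqrt (1 - m * s ^ 2)
        = ∫ s in (0:ℝ)..1, Real.sqrt (1 - s ^ 2) / Real.sqrt (1 - m * s ^ 2) := by
      have h := intervalIntegral.integral_comp_neg (a := (0:ℝ)) (b := 1)
        (fun s : ℝ => Real.sqrt (1 - s ^ 2) / Real.sqrt (1 - m * s ^ 2))
      simp only [neg_sq, neg_zero] at h
      exact h.symm
    rw [hneg]; ring
  -- put everything together
  set I : ℝ := ∫ s in (0:ℝ)..1, Real.sqrt (1 - s ^ 2) / Real.sqrt (1 - m * s ^ 2) with hI_def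
  have hval : (∫ φ in (-a)..a, Real.sqrt (Real.cos φ + E)) = 2 * Real.sqrt 2 * m * (2 * I) := by
    rw [← hsub, hcong, intervalIntegral.integral_const_mul, heven]
  rw [hval]
  have hEK := E_sub_K hm0.le hm1
  rw [← hI_def] at hEK
  have h2 : Real.sqrt 2 * Real.sqrt 2 = 2 := Real.mul_self_sqrt (by norm_num)
  have hrhs : (8 / π) * ellipticE m - (4 / π) * (1 - E) * ellipticK m
      = (8 / π) * (ellipticE m - (1 - m) * ellipticK m) := by
    simp only [hm_def]; ring
  rw [hrhs, hEK]
  field_simp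
  linear_combination (4 * I) * h2
end

section
/- Let j, j', j'', n_p be real numbers with j' ≠ 0, n_p² ≠ 1, and 𝒩 := n_p²·j·j'' + (j')² ≠ 0. Let A be the 2×2 real matrix A := (1/𝒩)·[[n_p·(j·j'' + (j')²), −(1−n_p²)²·j'·j''], [j·j', n_p·(j·j'' + (j')²)]]. Then: (i) for every real c, det(c·I − A) = ((𝒩·c − n_p·(j·j'' + (j')²))² + (1−n_p²)²·j·(j')²·j'')/𝒩², so the eigenvalues of A are exactly the roots of the quadratic (n_p·(j·j''+(j')²) − 𝒩·c)² + (1−n_p²)²·j·(j')²·j'' = 0; and (ii) A has two distinct real eigenvalues if and only if j·j'' < 0. -/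
open Matrix

/-- **Characteristic polynomial and hyperbolicity criterion for the Whitham system.**
With `j = J(ℰ)`, `j' = J'(ℰ)`, `j'' = J''(ℰ)`, `np` the reciprocal phase velocity, and
`𝒩 = np²·j·j'' + j'²`, the coefficient matrix `A` of the Whitham modulation system
satisfies: (i) for every real `c`,
`det(c·I − A) = ((𝒩c − np(jj''+j'²))² + (1−np²)²·j·j'²·j'')/𝒩²`, so the eigenvalues of `A`
are exactly the real roots of `(np(jj''+j'²) − 𝒩c)² + (1−np²)²·j·j'²·j'' = 0`; and
(ii) `A` has two distinct real eigenvalues if and only if `j·j'' < 0`. -/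
theorem whitham_matrix_eigenvalues
    (j j' j'' np N : ℝ)
    (hj' : j' ≠ 0) (hnp : np ^ 2 ≠ 1)
    (hN_def : N = np ^ 2 * j * j'' + j' ^ 2) (hN : N ≠ 0)
    (A : Matrix (Fin 2) (Fin 2) ℝ)
    (hA : A = N⁻¹ •
      !![np * (j * j'' + j' ^ 2), -((1 - np ^ 2) ^ 2 * j' * j'');
         j * j', np * (j * j'' + j' ^ 2)]) :
    (∀ c : ℝ,
      (c • (1 : Matrix (Fin 2) (Fin 2) ℝ) - A).det
        = ((N * c - np * (j * j'' + j' ^ 2)) ^ 2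
            + (1 - np ^ 2) ^ 2 * j * j' ^ 2 * j'') / N ^ 2) ∧
    (∀ c : ℝ,
      (c • (1 : Matrix (Fin 2) (Fin 2) ℝ) - A).det = 0 ↔
        (np * (j * j'' + j' ^ 2) - N * c) ^ 2
          + (1 - np ^ 2) ^ 2 * j * j' ^ 2 * j'' = 0) ∧
    ((∃ c₀ c₁ : ℝ, c₀ ≠ c₁ ∧
        (c₀ • (1 : Matrix (Fin 2) (Fin 2) ℝ) - A).det = 0 ∧
        (c₁ • (1 : Matrix (Fin 2) (Fin 2) ℝ) - A).det = 0) ↔ j * j'' < 0) := by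
  set a : ℝ := np * (j * j'' + j' ^ 2) with ha
  set K : ℝ := (1 - np ^ 2) ^ 2 * j * j' ^ 2 * j'' with hK
  have hdet : ∀ c : ℝ,
      (c • (1 : Matrix (Fin 2) (Fin 2) ℝ) - A).det
        = ((N * c - a) ^ 2 + K) / N ^ 2 := by
    intro c
    subst hA
    rw [det_fin_two]
    simp [Matrix.smul_apply, Matrix.one_apply, Matrix.sub_apply]
    field_simp
    ring
  have hiff : ∀ c : ℝ,
      (c • (1 : Matrix (Fin 2) (Fin 2) ℝ) - A).det = 0 ↔
        (a - N * c) ^ 2 + K = 0 := by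
    intro c
    rw [hdet c, div_eq_zero_iff]
    have h2 : N ^ 2 ≠ 0 := pow_ne_zero _ hN
    constructor
    · rintro (h | h)
      · nlinarith [h]
      · exact absurd h h2
    · intro h; left; nlinarith [h]
  refine ⟨hdet, hiff, ?_⟩
  constructor
  · rintro ⟨c₀, c₁, hne, h₀, h₁⟩
    rw [hiff] at h₀ h₁
    have hsq : (a - N * c₀) ^ 2 = (a - N * c₁) ^ 2 := by linarith
    have hdiff : a - N * c₀ ≠ a - N * c₁ := by
      intro h
      apply hne
      have : N * c₀ = N * c₁ := by linarith
      exact mul_left_cancel₀ hN this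
    have hopp : a - N * c₀ = -(a - N * c₁) := by
      rcases mul_eq_zero.mp (show ((a - N * c₀) - (a - N * c₁)) * ((a - N * c₀) + (a - N * c₁)) = 0
        by nlinarith) with h' | h'
      · exact absurd (by linarith) hdiff
      · linarith
    have hne0 : a - N * c₀ ≠ 0 := by
      intro h; apply hdiff; rw [h]; linarith [hopp, h]
    have hKneg : K < 0 := by nlinarith [sq_nonneg (a - N * c₀), sq_pos_of_ne_zero hne0]
    have hfac : (1 - np ^ 2) ^ 2 * j' ^ 2 > 0 := by
      apply mul_pos
      · apply sq_pos_of_ne_zero; intro h; apply hnp; linarith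
      · exact sq_pos_of_ne_zero hj'
    nlinarith [hKneg, hfac]
  · intro hjj
    have hfac : (1 - np ^ 2) ^ 2 * j' ^ 2 > 0 := by
      apply mul_pos
      · apply sq_pos_of_ne_zero; intro h; apply hnp; linarith
      · exact sq_pos_of_ne_zero hj'
    have hKneg : K < 0 := by nlinarith
    set s : ℝ := Real.sqrt (-K) with hs
    have hs2 : s ^ 2 = -K := Real.sq_sqrt (by linarith)
    have hspos : 0 < s := Real.sqrt_pos.mpr (by linarith)
    refine ⟨(a - s) / N, (a + s) / N, ?_, ?_, ?_⟩
    · intro h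
      field_simp at h
      linarith
    · rw [hiff]
      have : N * ((a - s) / N) = a - s := by field_simp
      rw [this]; nlinarith [hs2]
    · rw [hiff]
      have : N * ((a + s) / N) = a + s := by field_simp
      rw [this]; nlinarith [hs2]
end

section
/- Let w₀ and w₁ be distinct negative real numbers, set r := √(w₀·w₁) > 0, ℰ := −(w₀+w₁)/(2r) and n_p := (1−r)/(1+r), and let j, j' be real numbers with j'' := j/(4·(1−ℰ²)) and 𝒩 := n_p²·j·j'' + (j')² ≠ 0. Let A := (1/𝒩)·[[n_p·(j·j''+(j')²), −(1−n_p²)²·j'·j''], [j·j', n_p·(j·j''+(j')²)]]. For j ∈ {0,1}, define the vector v_j := (−w_{1−j}/((1+r)²·r), (w_{1−j}−w_j)/(4·w_j·r)) and the scalar c_j := [r·(1+r)·j + (w_j−w_{1−j})·(1−r)·j'] / [r·(1−r)·j + (w_j−w_{1−j})·(1+r)·j'], assuming the latter denominator is nonzero. Then A·v_j = c_j·v_j for j = 0 and j = 1; that is, w₀ and w₁ are Riemann invariants diagonalizing the Whitham system, with characteristic velocities c₀ and c₁. -/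
open Matrix

lemma key (a b r J J' E np J'' N : ℝ) (hr0 : 0 < r) (hr2 : r ^ 2 = a * b)
    (ha : a ≠ 0) (hb : b ≠ 0) (hab : a ≠ b)
    (hE : E = -(a + b) / (2 * r)) (hnp : np = (1 - r) / (1 + r))
    (hJ'' : J'' = J / (4 * (1 - E ^ 2)))
    (hN_def : N = np ^ 2 * J * J'' + J' ^ 2) (hN : N ≠ 0)
    (hden : r * (1 - r) * J + (a - b) * (1 + r) * J' ≠ 0) :
    (N⁻¹ * (np * (J * J'' + J' ^ 2) * (-b / ((1 + r) ^ 2 * r)) +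
        (-((1 - np ^ 2) ^ 2 * J' * J'')) * ((b - a) / (4 * a * r)))
      = (r * (1 + r) * J + (a - b) * (1 - r) * J')
          / (r * (1 - r) * J + (a - b) * (1 + r) * J') * (-b / ((1 + r) ^ 2 * r)))
    ∧ (N⁻¹ * (J * J' * (-b / ((1 + r) ^ 2 * r)) +
        np * (J * J'' + J' ^ 2) * ((b - a) / (4 * a * r)))
      = (r * (1 + r) * J + (a - b) * (1 - r) * J')
          / (r * (1 - r) * J + (a - b) * (1 + r) * J') * ((b - a) / (4 * a * r))) := by
  have hr' : r ≠ 0 := ne_of_gt hr0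
  have h1r : (1 : ℝ) + r ≠ 0 := by positivity
  have hab' : a - b ≠ 0 := sub_ne_zero.mpr hab
  have hE2 : (1 : ℝ) - E ^ 2 = -(a - b) ^ 2 / (4 * r ^ 2) := by
    subst hE; field_simp; linear_combination 16 * hr2
  have hE2' : (1 : ℝ) - E ^ 2 ≠ 0 := by
    rw [hE2]
    have h1 : (a - b) ^ 2 > 0 := by positivity
    have h2 : (4 : ℝ) * r ^ 2 > 0 := by positivity
    intro h; rw [div_eq_zero_iff] at h
    rcases h with h | h
    · nlinarith
    · nlinarith
  have hJ2 : J'' = -(J * r ^ 2) / (a - b) ^ 2 := by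
    rw [hJ'', hE2]; field_simp
  have hNf : N = ((a - b) * (1 + r) * J' + r * (1 - r) * J) *
      ((a - b) * (1 + r) * J' - r * (1 - r) * J) / ((1 + r) ^ 2 * (a - b) ^ 2) := by
    rw [hN_def, hnp, hJ2]; field_simp; ring
  have hden2 : (a - b) * (1 + r) * J' - r * (1 - r) * J ≠ 0 := by
    intro h
    apply hN
    rw [hNf, h, mul_zero, zero_div]
  have hdenN : (a - b) * (1 + r) * J' + r * (1 - r) * J ≠ 0 := by
    intro h
    apply hden
    linarith [h]
  rw [hNf, hJ2, hnp]
  constructor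
  · field_simp
    have hb' : b = r ^ 2 / a := by field_simp; linarith [hr2]
    subst hb'
    field_simp
    ring
  · field_simp
    have hb' : b = r ^ 2 / a := by field_simp; linarith [hr2]
    subst hb'
    field_simp
    ring


/-- **Riemann invariants diagonalize the Whitham system.**
Let `w 0 ≠ w 1` be negative reals, `r = √(w₀w₁)`, `ℰ = −(w₀+w₁)/(2r)`,
`np = (1−r)/(1+r)`, and let `J, J'` be reals with `J'' = J/(4(1−ℰ²))` and
`𝒩 = np²JJ'' + J'² ≠ 0`.  Then the columns `v k` of the Jacobian of
`(w₀,w₁) ↦ (np,ℰ)` are eigenvectors of the Whitham coefficient matrix `A`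
with the eigenvalues (characteristic velocities)
`c k = (r(1+r)J + (w_k−w_{1−k})(1−r)J')/(r(1−r)J + (w_k−w_{1−k})(1+r)J')`. -/
theorem whitham_riemann_invariants
    (w : Fin 2 → ℝ) (hw_ne : w 0 ≠ w 1) (hw0 : w 0 < 0) (hw1 : w 1 < 0)
    (J J' r E np J'' N : ℝ)
    (hr : r = Real.sqrt (w 0 * w 1))
    (hE : E = -(w 0 + w 1) / (2 * r))
    (hnp : np = (1 - r) / (1 + r))
    (hJ'' : J'' = J / (4 * (1 - E ^ 2)))
    (hN_def : N = np ^ 2 * J * J'' + J' ^ 2) (hN : N ≠ 0)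
    (A : Matrix (Fin 2) (Fin 2) ℝ)
    (hA : A = N⁻¹ •
      !![np * (J * J'' + J' ^ 2), -((1 - np ^ 2) ^ 2 * J' * J'');
         J * J', np * (J * J'' + J' ^ 2)])
    (v : Fin 2 → Fin 2 → ℝ)
    (hv : ∀ k : Fin 2,
      v k = ![-(w (1 - k)) / ((1 + r) ^ 2 * r), (w (1 - k) - w k) / (4 * w k * r)])
    (c : Fin 2 → ℝ)
    (hden : ∀ k : Fin 2, r * (1 - r) * J + (w k - w (1 - k)) * (1 + r) * J' ≠ 0)
    (hc : ∀ k : Fin 2,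
      c k = (r * (1 + r) * J + (w k - w (1 - k)) * (1 - r) * J')
              / (r * (1 - r) * J + (w k - w (1 - k)) * (1 + r) * J')) :
    ∀ k : Fin 2, A.mulVec (v k) = c k • v k := by
  have hw01 : 0 < w 0 * w 1 := mul_pos_of_neg_of_neg hw0 hw1
  have hr0 : 0 < r := hr ▸ Real.sqrt_pos.mpr hw01
  have hr2 : r ^ 2 = w 0 * w 1 := by rw [hr, Real.sq_sqrt hw01.le]
  intro k
  match k with
  | 0 =>
    have hk := key (w 0) (w 1) r J J' E np J'' N hr0 hr2 (ne_of_lt hw0) (ne_of_lt hw1)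
      hw_ne hE hnp hJ'' hN_def hN (by simpa using hden 0)
    funext i
    rw [hA, hv 0, hc 0]
    fin_cases i <;>
      simp [Matrix.mulVec, Matrix.smul_apply, Fin.sum_univ_two, Matrix.cons_val_zero,
        Matrix.cons_val_one, Matrix.head_cons, dotProduct]
    · linear_combination hk.1
    · linear_combination hk.2
  | 1 =>
    have hr2' : r ^ 2 = w 1 * w 0 := by rw [hr2]; ring
    have hE' : E = -(w 1 + w 0) / (2 * r) := by rw [hE]; ring_nf
    have hk := key (w 1) (w 0) r J J' E np J'' N hr0 hr2' (ne_of_lt hw1) (ne_of_lt hw0)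
      hw_ne.symm hE' hnp hJ'' hN_def hN (by simpa using hden 1)
    funext i
    rw [hA, hv 1, hc 1]
    fin_cases i <;>
      simp [Matrix.mulVec, Matrix.smul_apply, Fin.sum_univ_two, Matrix.cons_val_zero,
        Matrix.cons_val_one, Matrix.head_cons, dotProduct]
    · linear_combination hk.1
    · linear_combination hk.2
end

section
/- For every m with 0 < m < 1, the improper integral identity ∫_{s=0}^{1} [√(1−m·s²) − (1−s²)] / (s²·√(1−s²)·√(1−m·s²)) ds = E(m) holds, where the integrand is continuous on (0,1) and integrable at both endpoints. -/
set_option maxHeartbeats 1000000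


open MeasureTheory Real

/-- **An improper integral identity for `E(m)`.** For `0 < m < 1`, the integrand
`(√(1−m s²) − (1−s²))/(s²√(1−s²)√(1−m s²))` is continuous on `(0,1)`, integrable at both
endpoints, and integrates over `(0,1)` to `E(m)`. -/
theorem integral_eq_ellipticE (m : ℝ) (hm₀ : 0 < m) (hm₁ : m < 1) :
    ContinuousOn
      (fun s : ℝ => (Real.sqrt (1 - m * s ^ 2) - (1 - s ^ 2))
        / (s ^ 2 * Real.sqrt (1 - s ^ 2) * Real.sqrt (1 - m * s ^ 2)))
      (Set.Ioo 0 1) ∧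
    IntervalIntegrable
      (fun s : ℝ => (Real.sqrt (1 - m * s ^ 2) - (1 - s ^ 2))
        / (s ^ 2 * Real.sqrt (1 - s ^ 2) * Real.sqrt (1 - m * s ^ 2)))
      volume 0 1 ∧
    ∫ s in (0 : ℝ)..1,
        (Real.sqrt (1 - m * s ^ 2) - (1 - s ^ 2))
          / (s ^ 2 * Real.sqrt (1 - s ^ 2) * Real.sqrt (1 - m * s ^ 2))
      = ellipticE m := by
  set f : ℝ → ℝ := fun s =>
    (Real.sqrt (1 - m * s ^ 2) - (1 - s ^ 2))
      / (s ^ 2 * Real.sqrt (1 - s ^ 2) * Real.sqrt (1 - m * s ^ 2)) with hf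
  set w : ℝ → ℝ := fun s => Real.sqrt (1 - m * s ^ 2) / Real.sqrt (1 - s ^ 2) with hw
  -- basic facts
  have key : ∀ s ∈ Set.Ioo (0:ℝ) 1,
      0 < 1 - s ^ 2 ∧ 0 < 1 - m * s ^ 2 := by
    rintro s ⟨hs0, hs1⟩
    constructor <;> nlinarith
  -- continuity
  have hcont : ContinuousOn f (Set.Ioo 0 1) := by
    intro s hs
    obtain ⟨h1s, h2s⟩ := key s hs
    have hu : 0 < Real.sqrt (1 - s ^ 2) := Real.sqrt_pos.2 h1s
    have hv : 0 < Real.sqrt (1 - m * s ^ 2) := Real.sqrt_pos.2 h2s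
    have hs0 : (0:ℝ) < s := hs.1
    apply ContinuousWithinAt.div
    · exact ((Real.continuous_sqrt.comp (by continuity)).sub (by continuity)).continuousWithinAt
    · exact (((continuous_pow 2).mul (Real.continuous_sqrt.comp (by continuity))).mul
        (Real.continuous_sqrt.comp (by continuity))).continuousWithinAt
    · positivity
  have hwcont : ContinuousOn w (Set.Ioo 0 1) := by
    intro s hs
    obtain ⟨h1s, h2s⟩ := key s hs
    have hu : 0 < Real.sqrt (1 - s ^ 2) := Real.sqrt_pos.2 h1s
    apply ContinuousWithinAt.div
    · exact (Real.continuous_sqrt.comp (by continuity)).continuousWithinAt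
    · exact (Real.continuous_sqrt.comp (by continuity)).continuousWithinAt
    · positivity
  -- the comparison function
  have hgint : IntervalIntegrable (fun s : ℝ => (1 - s) ^ (-(1/2) : ℝ)) volume 0 1 := by
    have h := (intervalIntegral.intervalIntegrable_rpow' (a := 0) (b := 1)
      (r := -(1/2)) (by norm_num)).comp_sub_left 1
    norm_num at h
    exact h.symm
  -- pointwise bounds
  have hbound : ∀ s ∈ Set.Ioo (0:ℝ) 1,
      ‖f s‖ ≤ (Real.sqrt (1 - m))⁻¹ * (1 - s) ^ (-(1/2) : ℝ) := by
    rintro s hs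
    obtain ⟨h1s, h2s⟩ := key s hs
    obtain ⟨hs0, hs1⟩ := hs
    have hu : 0 < Real.sqrt (1 - s ^ 2) := Real.sqrt_pos.2 h1s
    have hv : 0 < Real.sqrt (1 - m * s ^ 2) := Real.sqrt_pos.2 h2s
    have hu2 : Real.sqrt (1 - s ^ 2) ^ 2 = 1 - s ^ 2 := Real.sq_sqrt h1s.le
    have hv2 : Real.sqrt (1 - m * s ^ 2) ^ 2 = 1 - m * s ^ 2 := Real.sq_sqrt h2s.le
    have hv1 : Real.sqrt (1 - m * s ^ 2) ≤ 1 := by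
      nlinarith [hv2, hv.le]
    have hnum0 : 0 ≤ Real.sqrt (1 - m * s ^ 2) - (1 - s ^ 2) := by
      have : (1 - s ^ 2) ≤ Real.sqrt (1 - m * s ^ 2) := by
        rw [show (1 - s^2 : ℝ) = Real.sqrt ((1-s^2)^2) by
          rw [Real.sqrt_sq h1s.le]]
        exact Real.sqrt_le_sqrt (by nlinarith)
      linarith
    have hnum1 : Real.sqrt (1 - m * s ^ 2) - (1 - s ^ 2) ≤ s ^ 2 := by nlinarith
    have hfs : f s ≤ (Real.sqrt (1 - s ^ 2) * Real.sqrt (1 - m * s ^ 2))⁻¹ := by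
      have hrw : (Real.sqrt (1 - s ^ 2) * Real.sqrt (1 - m * s ^ 2))⁻¹
          = s ^ 2 / (s ^ 2 * Real.sqrt (1 - s ^ 2) * Real.sqrt (1 - m * s ^ 2)) := by
        field_simp
      rw [hf, hrw]
      exact (div_le_div_iff_of_pos_right (by positivity)).2 hnum1
    have hfpos : 0 ≤ f s := by
      rw [hf]; positivity
    rw [Real.norm_eq_abs, abs_of_nonneg hfpos]
    calc f s ≤ (Real.sqrt (1 - s ^ 2) * Real.sqrt (1 - m * s ^ 2))⁻¹ := hfs
    _ ≤ (Real.sqrt (1 - m))⁻¹ * (1 - s) ^ (-(1/2) : ℝ) := by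
        have h1 : (1 - s : ℝ) ^ (-(1/2) : ℝ) = (Real.sqrt (1 - s))⁻¹ := by
          rw [Real.rpow_neg (by linarith), ← Real.sqrt_eq_rpow]
        rw [h1, ← mul_inv]
        have hus : Real.sqrt (1 - s) ≤ Real.sqrt (1 - s ^ 2) :=
          Real.sqrt_le_sqrt (by nlinarith)
        have hvm : Real.sqrt (1 - m) ≤ Real.sqrt (1 - m * s ^ 2) :=
          Real.sqrt_le_sqrt (by nlinarith)
        have hsp : (0:ℝ) < Real.sqrt (1 - s) := Real.sqrt_pos.2 (by linarith)
        have hmp : (0:ℝ) < Real.sqrt (1 - m) := Real.sqrt_pos.2 (by linarith)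
        exact inv_anti₀ (mul_pos hmp hsp)
          (by nlinarith [hsp.le, hmp.le, hu.le, hv.le])
  have hwbound : ∀ s ∈ Set.Ioo (0:ℝ) 1,
      ‖w s‖ ≤ (Real.sqrt (1 - m))⁻¹ * (1 - s) ^ (-(1/2) : ℝ) := by
    rintro s hs
    obtain ⟨h1s, h2s⟩ := key s hs
    obtain ⟨hs0, hs1⟩ := hs
    have hu : 0 < Real.sqrt (1 - s ^ 2) := Real.sqrt_pos.2 h1s
    have hv : 0 < Real.sqrt (1 - m * s ^ 2) := Real.sqrt_pos.2 h2s
    have hv2 : Real.sqrt (1 - m * s ^ 2) ^ 2 = 1 - m * s ^ 2 := Real.sq_sqrt h2s.le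
    have hv1 : Real.sqrt (1 - m * s ^ 2) ≤ 1 := by nlinarith [hv2, hv.le]
    have hwpos : 0 ≤ w s := by rw [hw]; positivity
    rw [Real.norm_eq_abs, abs_of_nonneg hwpos]
    have h1 : (1 - s : ℝ) ^ (-(1/2) : ℝ) = (Real.sqrt (1 - s))⁻¹ := by
      rw [Real.rpow_neg (by linarith), ← Real.sqrt_eq_rpow]
    rw [h1, ← mul_inv]
    have hus : Real.sqrt (1 - s) ≤ Real.sqrt (1 - s ^ 2) :=
      Real.sqrt_le_sqrt (by nlinarith)
    have hvm : Real.sqrt (1 - m) ≤ Real.sqrt (1 - m * s ^ 2) :=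
      Real.sqrt_le_sqrt (by nlinarith)
    have hsp : (0:ℝ) < Real.sqrt (1 - s) := Real.sqrt_pos.2 (by linarith)
    have hmp : (0:ℝ) < Real.sqrt (1 - m) := Real.sqrt_pos.2 (by linarith)
    have hws : w s ≤ (Real.sqrt (1 - s ^ 2))⁻¹ := by
      rw [hw, div_le_iff₀ hu, inv_mul_cancel₀ (ne_of_gt hu)]
      exact hv1
    calc w s ≤ (Real.sqrt (1 - s ^ 2))⁻¹ := hws
    _ ≤ (Real.sqrt (1 - m) * Real.sqrt (1 - s))⁻¹ :=
        inv_anti₀ (mul_pos hmp hsp)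
          (by nlinarith [hsp.le, hmp.le, hu.le])
  have le01 : (0:ℝ) ≤ 1 := zero_le_one
  have hgint' : IntegrableOn
      (fun s : ℝ => (Real.sqrt (1 - m))⁻¹ * (1 - s) ^ (-(1/2) : ℝ))
      (Set.Ioo 0 1) volume :=
    (intervalIntegrable_iff_integrableOn_Ioo_of_le le01).1
      (hgint.const_mul ((Real.sqrt (1 - m))⁻¹))
  have hfint : IntervalIntegrable f volume 0 1 := by
    rw [intervalIntegrable_iff_integrableOn_Ioo_of_le le01]
    exact Integrable.mono' hgint'
      (hcont.aestronglyMeasurable measurableSet_Ioo)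
      ((ae_restrict_iff' measurableSet_Ioo).2 (Filter.Eventually.of_forall hbound))
  have hwint : IntervalIntegrable w volume 0 1 := by
    rw [intervalIntegrable_iff_integrableOn_Ioo_of_le le01]
    exact Integrable.mono' hgint'
      (hwcont.aestronglyMeasurable measurableSet_Ioo)
      ((ae_restrict_iff' measurableSet_Ioo).2 (Filter.Eventually.of_forall hwbound))
  -- the antiderivative of f - w
  set F : ℝ → ℝ := fun s => -(m * s * Real.sqrt (1 - s ^ 2)) / (1 + Real.sqrt (1 - m * s ^ 2))
    with hF
  have hFcont : Continuous F := by
    apply Continuous.div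
    · continuity
    · continuity
    · intro x
      have := Real.sqrt_nonneg (1 - m * x ^ 2)
      positivity
  have hderiv : ∀ s ∈ Set.Ioo (0:ℝ) 1, HasDerivAt F (f s - w s) s := by
    rintro s hs
    obtain ⟨h1s, h2s⟩ := key s hs
    obtain ⟨hs0, hs1⟩ := hs
    have hu : 0 < Real.sqrt (1 - s ^ 2) := Real.sqrt_pos.2 h1s
    have hv : 0 < Real.sqrt (1 - m * s ^ 2) := Real.sqrt_pos.2 h2s
    have hu2 : Real.sqrt (1 - s ^ 2) ^ 2 = 1 - s ^ 2 := Real.sq_sqrt h1s.le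
    have hv2 : Real.sqrt (1 - m * s ^ 2) ^ 2 = 1 - m * s ^ 2 := Real.sq_sqrt h2s.le
    have d1 : HasDerivAt (fun x : ℝ => 1 - x ^ 2) (-(2 * s)) s := by
      simpa using ((hasDerivAt_pow 2 s).const_sub 1)
    have d2 : HasDerivAt (fun x : ℝ => Real.sqrt (1 - x ^ 2))
        (-(2 * s) / (2 * Real.sqrt (1 - s ^ 2))) s := d1.sqrt (ne_of_gt h1s)
    have d3 : HasDerivAt (fun x : ℝ => 1 - m * x ^ 2) (-(m * (2 * s))) s := by
      simpa [mul_comm] using (((hasDerivAt_pow 2 s).const_mul m).const_sub 1)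
    have d4 : HasDerivAt (fun x : ℝ => Real.sqrt (1 - m * x ^ 2))
        (-(m * (2 * s)) / (2 * Real.sqrt (1 - m * s ^ 2))) s := d3.sqrt (ne_of_gt h2s)
    have d5 : HasDerivAt (fun x : ℝ => m * x) m s := by
      simpa using (hasDerivAt_id s).const_mul m
    have d6 := (d5.mul d2).neg
    have d7 := d4.const_add 1
    have hden : (1 : ℝ) + Real.sqrt (1 - m * s ^ 2) ≠ 0 := by positivity
    have d8 := d6.div d7 hden
    have d9 : HasDerivAt F _ s := d8
    convert d9 using 1
    simp only [Pi.neg_apply, Pi.mul_apply]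
    rw [hf, hw]
    beta_reduce
    set U := Real.sqrt (1 - s ^ 2) with hU
    set V := Real.sqrt (1 - m * s ^ 2) with hV
    field_simp
    ring_nf
    linear_combination (V*s^2*m + V^2*s^2*m + s^4*m^2) * hu2 + (1 + V - 2*V*s^2 - V^2*s^2 - s^2 + s^2*m - s^4*m) * hv2
  have hzero : (∫ s in (0:ℝ)..1, (f s - w s)) = 0 := by
    rw [intervalIntegral.integral_eq_sub_of_hasDeriv_right_of_le le01
      hFcont.continuousOn (fun x hx => (hderiv x hx).hasDerivWithinAt)
      (hfint.sub hwint)]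
    rw [hF]
    norm_num
  refine ⟨hcont, hfint, ?_⟩
  have hsub := intervalIntegral.integral_sub hfint hwint
  rw [hsub] at hzero
  have : ellipticE m = ∫ s in (0:ℝ)..1, w s := rfl
  rw [this]
  linarith
end
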